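/- arXiv:2207.05982 — 8 statements merged into one kernel-verified Lean document; each statement's English description precedes it below -/
import Mathlib

section
/- For two nonnegative extended-real-valued sequences (a_n) and (b_n), one has liminf_{n→∞} (1/n) log(a_n + b_n) ≤ max( liminf_{n→∞} (1/n) log a_n , limsup_{n→∞} (1/n) log b_n ). -/
open Filter ENNReal

lemma aux_mul_sup (c x y : EReal) : c * (x ⊔ y) ≤ (c * x) ⊔ (c * y) := by
  rcases le_total x y with h | h
  · rw [sup_eq_right.2 h]; exact le_sup_right
  · rw [sup_eq_left.2 h]; exact le_sup_left

lemma aux_distrib (r : ℝ) (c : ℝ) (hc : 0 ≤ c) (m : EReal) :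
    (c : EReal) * ((r : EReal) + m) ≤ (c : EReal) * r + (c : EReal) * m := by
  rcases eq_or_lt_of_le hc with rfl | hc
  · simp [EReal.zero_mul]
  · induction m using EReal.rec with
    | bot =>
        rw [EReal.add_bot, EReal.mul_bot_of_pos (EReal.coe_pos.2 hc)]
        exact bot_le
    | coe m =>
        rw [← EReal.coe_add, ← EReal.coe_mul, ← EReal.coe_mul, ← EReal.coe_mul,
          ← EReal.coe_add, mul_add]
    | top =>
        rw [EReal.coe_add_top, EReal.mul_top_of_pos (EReal.coe_pos.2 hc),
          ← EReal.coe_mul, EReal.coe_add_top]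

lemma aux_pointwise (a b : ℝ≥0∞) (n : ℕ) :
    (((n : ℝ)⁻¹ : ℝ) : EReal) * ENNReal.log (a + b) ≤
      (((n : ℝ)⁻¹ : ℝ) : EReal) * (Real.log 2 : EReal)
        + ((((n : ℝ)⁻¹ : ℝ) : EReal) * ENNReal.log a
            ⊔ (((n : ℝ)⁻¹ : ℝ) : EReal) * ENNReal.log b) := by
  have hc : (0 : ℝ) ≤ (n : ℝ)⁻¹ := by positivity
  have h2 : ENNReal.log 2 = (Real.log 2 : EReal) := by
    rw [ENNReal.log_pos_real (by norm_num) (by norm_num)]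
    norm_num
  have hab : a + b ≤ 2 * (a ⊔ b) := by
    rcases le_total a b with h | h
    · calc a + b ≤ b + b := by exact add_le_add_left h b
        _ = 2 * b := (two_mul b).symm
        _ ≤ 2 * (a ⊔ b) := by gcongr; exact le_sup_right
    · calc a + b ≤ a + a := by exact add_le_add_right h a
        _ = 2 * a := (two_mul a).symm
        _ ≤ 2 * (a ⊔ b) := by gcongr; exact le_sup_left
  have hlog : ENNReal.log (a + b) ≤ (Real.log 2 : EReal) + (ENNReal.log a ⊔ ENNReal.log b) := by
    calc ENNReal.log (a + b) ≤ ENNReal.log (2 * (a ⊔ b)) := ENNReal.log_monotone hab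
      _ = ENNReal.log 2 + ENNReal.log (a ⊔ b) := ENNReal.log_mul_add
      _ = (Real.log 2 : EReal) + (ENNReal.log a ⊔ ENNReal.log b) := by
          rw [h2, ENNReal.log_monotone.map_sup]
  calc (((n : ℝ)⁻¹ : ℝ) : EReal) * ENNReal.log (a + b)
      ≤ (((n : ℝ)⁻¹ : ℝ) : EReal) * ((Real.log 2 : EReal) + (ENNReal.log a ⊔ ENNReal.log b)) :=
        mul_le_mul_of_nonneg_left hlog (by exact_mod_cast hc)
    _ ≤ (((n : ℝ)⁻¹ : ℝ) : EReal) * (Real.log 2 : EReal)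
          + (((n : ℝ)⁻¹ : ℝ) : EReal) * (ENNReal.log a ⊔ ENNReal.log b) :=
        aux_distrib _ _ hc _
    _ ≤ _ := by
        gcongr
        exact aux_mul_sup _ _ _

lemma aux_liminf_sup {F G : ℕ → EReal} :
    Filter.liminf (fun n => F n ⊔ G n) Filter.atTop ≤
      Filter.liminf F Filter.atTop ⊔ Filter.limsup G Filter.atTop := by
  refine le_of_forall_gt_imp_ge_of_dense fun c hc => ?_
  obtain ⟨hF, hG⟩ := sup_lt_iff.1 hc
  have h1 : ∃ᶠ n in atTop, F n < c := frequently_lt_of_liminf_lt (by isBoundedDefault) hF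
  have h2 : ∀ᶠ n in atTop, G n < c := eventually_lt_of_limsup_lt hG
  exact liminf_le_of_frequently_le ((h1.and_eventually h2).mono fun n hn =>
    (sup_le hn.1.le hn.2.le))

/-- Principle of the largest term (lower bound version): for nonnegative extended-real-valued
sequences `a`, `b`, `liminf (1/n) log (a n + b n) ≤ max (liminf (1/n) log a n, limsup (1/n) log b n)`. -/
theorem stmt_1 (a b : ℕ → ℝ≥0∞) :
    Filter.liminf (fun n : ℕ => (((n : ℝ)⁻¹ : ℝ) : EReal) * ENNReal.log (a n + b n))
        Filter.atTop ≤
      Filter.liminf (fun n : ℕ => (((n : ℝ)⁻¹ : ℝ) : EReal) * ENNReal.log (a n)) Filter.atTop ⊔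
        Filter.limsup (fun n : ℕ => (((n : ℝ)⁻¹ : ℝ) : EReal) * ENNReal.log (b n))
          Filter.atTop := by
  set F : ℕ → EReal := fun n => (((n : ℝ)⁻¹ : ℝ) : EReal) * ENNReal.log (a n) with hF
  set G : ℕ → EReal := fun n => (((n : ℝ)⁻¹ : ℝ) : EReal) * ENNReal.log (b n) with hG
  set C : ℕ → EReal := fun n => (((n : ℝ)⁻¹ : ℝ) : EReal) * (Real.log 2 : EReal) with hC
  have hCtend : Tendsto C atTop (nhds 0) := by
    have : Tendsto (fun n : ℕ => (n : ℝ)⁻¹ * Real.log 2) atTop (nhds 0) := by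
      simpa using ((tendsto_inv_atTop_nhds_zero_nat (𝕜 := ℝ)).mul_const (Real.log 2))
    have := (continuous_coe_real_ereal.tendsto 0).comp this
    simpa [Function.comp_def, EReal.coe_mul, hC] using this
  have hClimsup : Filter.limsup C Filter.atTop = 0 := hCtend.limsup_eq
  have step1 : Filter.liminf (fun n : ℕ => (((n : ℝ)⁻¹ : ℝ) : EReal) * ENNReal.log (a n + b n))
      Filter.atTop ≤ Filter.liminf (fun n => C n + (F n ⊔ G n)) Filter.atTop := by
    refine liminf_le_liminf (Filter.Eventually.of_forall fun n => ?_)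
    exact aux_pointwise (a n) (b n) n
  have step2 : Filter.liminf (fun n => C n + (F n ⊔ G n)) Filter.atTop ≤
      Filter.limsup C Filter.atTop + Filter.liminf (fun n => F n ⊔ G n) Filter.atTop := by
    refine EReal.liminf_add_le ?_ ?_
    · left; rw [hClimsup]; simp
    · left; rw [hClimsup]; simp
  refine step1.trans (step2.trans ?_)
  rw [hClimsup, zero_add]
  exact aux_liminf_sup
end

section
/- Let J be a maxitive concentration on a topological space E (i.e., additionally J(A ∪ B) ≤ J(A) ∨ J(B)). Then the convex integral φ_J is maxitive: φ_J(f ∨ g) ≤ φ_J(f) ∨ φ_J(g) for all Borel functions f, g : E → ℝ ∪ {-∞}. -/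
open Set

/-- The convex integral of `f` with respect to a concentration `J`. -/
noncomputable def convexIntegral {E : Type*} (J : Set E → EReal) (f : E → EReal) : EReal :=
  ⨆ c : ℝ, ((c : EReal) + J {x | (c : EReal) < f x})

/-- If the concentration `J` is maxitive, then the convex integral is maxitive:
`φ_J(f ∨ g) ≤ φ_J(f) ∨ φ_J(g)`. -/
theorem stmt_7 {E : Type*} [TopologicalSpace E] [MeasurableSpace E] [BorelSpace E]
    (J : Set E → EReal)
    (hJempty : J ∅ = ⊥) (hJuniv : J univ = 0) (hJle : ∀ A : Set E, J A ≤ 0)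
    (hJmono : ∀ A B : Set E, MeasurableSet A → MeasurableSet B → A ⊆ B → J A ≤ J B)
    (hJmax : ∀ A B : Set E, MeasurableSet A → MeasurableSet B → J (A ∪ B) ≤ J A ⊔ J B)
    (f g : E → EReal) (hf : Measurable f) (hg : Measurable g)
    (hftop : ∀ x, f x ≠ ⊤) (hgtop : ∀ x, g x ≠ ⊤) :
    convexIntegral J (fun x => f x ⊔ g x) ≤ convexIntegral J f ⊔ convexIntegral J g := by
  refine iSup_le fun c => ?_
  have hset : {x | (c : EReal) < f x ⊔ g x} =
      {x | (c : EReal) < f x} ∪ {x | (c : EReal) < g x} := by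
    ext x; simp [lt_sup_iff]
  have hmf : MeasurableSet {x | (c : EReal) < f x} :=
    measurableSet_lt measurable_const hf
  have hmg : MeasurableSet {x | (c : EReal) < g x} :=
    measurableSet_lt measurable_const hg
  have h1 : (c : EReal) + J {x | (c : EReal) < f x ⊔ g x} ≤
      ((c : EReal) + J {x | (c : EReal) < f x}) ⊔ ((c : EReal) + J {x | (c : EReal) < g x}) := by
    rw [hset]
    calc (c : EReal) + J ({x | (c : EReal) < f x} ∪ {x | (c : EReal) < g x})
        ≤ (c : EReal) + (J {x | (c : EReal) < f x} ⊔ J {x | (c : EReal) < g x}) := by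
          exact add_le_add_right (hJmax _ _ hmf hmg) _
      _ = ((c : EReal) + J {x | (c : EReal) < f x}) ⊔ ((c : EReal) + J {x | (c : EReal) < g x}) := by
          rcases le_total (J {x | (c : EReal) < f x}) (J {x | (c : EReal) < g x}) with h | h
          · rw [sup_eq_right.2 h, sup_eq_right.2 (add_le_add_right h (c : EReal))]
          · rw [sup_eq_left.2 h, sup_eq_left.2 (add_le_add_right h (c : EReal))]
  refine h1.trans (sup_le_sup ?_ ?_)
  · exact le_iSup (fun c : ℝ => (c : EReal) + J {x | (c : EReal) < f x}) c
  · exact le_iSup (fun c : ℝ => (c : EReal) + J {x | (c : EReal) < g x}) c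
end

section
/- Let E be a topological space and J a concentration on E. Let I : E → [0,∞]. Then the lower large-deviation bound -inf_{x∈O} I(x) ≤ J(O) holds for every open set O ⊆ E if and only if the lower Laplace bound φ_J(f) ≥ sup_{x∈E}(f(x) - I(x)) holds for every lower semicontinuous function f : E → ℝ ∪ {-∞}. -/
open Set

/-- Duality for the lower bounds: the lower large-deviation bound over open sets holds
iff the lower Laplace bound over lower semicontinuous functions holds. -/
theorem stmt_9 {E : Type*} [TopologicalSpace E] [MeasurableSpace E] [BorelSpace E]
    (J : Set E → EReal)
    (hJempty : J ∅ = ⊥) (hJuniv : J univ = 0) (hJle : ∀ A : Set E, J A ≤ 0)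
    (hJmono : ∀ A B : Set E, MeasurableSet A → MeasurableSet B → A ⊆ B → J A ≤ J B)
    (I : E → EReal) (hI : ∀ x, 0 ≤ I x) :
    (∀ O : Set E, IsOpen O → -(⨅ x ∈ O, I x) ≤ J O) ↔
      (∀ f : E → EReal, LowerSemicontinuous f → (∀ x, f x ≠ ⊤) →
        (⨆ x : E, f x - I x) ≤ convexIntegral J f) := by
  constructor
  · intro h f hf hft
    refine iSup_le fun x => ?_
    rw [← EReal.ge_of_forall_gt_iff_ge]
    intro z hz
    -- I x is a real number
    have hIbot : I x ≠ ⊥ := fun hb => absurd (hI x) (by simp [hb])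
    have hItop : I x ≠ ⊤ := by
      intro ht
      rw [ht, EReal.sub_top] at hz
      exact absurd hz (by simp)
    lift I x to ℝ using ⟨hItop, hIbot⟩ with b hb
    have hfbot : f x ≠ ⊥ := by
      intro hb'
      rw [hb'] at hz
      rw [EReal.bot_sub] at hz
      exact absurd hz (by simp)
    lift f x to ℝ using ⟨hft x, hfbot⟩ with r hr
    rw [← EReal.coe_sub, EReal.coe_lt_coe_iff] at hz
    -- use c := z + b
    set c : ℝ := z + b with hc
    have hcr : (c : EReal) < f x := by
      rw [← hr, EReal.coe_lt_coe_iff]; linarith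
    set O : Set E := {y | (c : EReal) < f y} with hO
    have hOopen : IsOpen O := hf.isOpen_preimage c
    have hxO : x ∈ O := hcr
    have h1 : -I x ≤ J O := by
      refine le_trans ?_ (h O hOopen)
      refine EReal.neg_le_neg_iff.mpr ?_
      exact iInf₂_le x hxO
    have h2 : (z : EReal) = (c : EReal) + (-(b : EReal)) := by
      rw [← EReal.coe_neg, ← EReal.coe_add]
      norm_num [hc]
    rw [h2]
    calc (c : EReal) + (-(b : EReal)) ≤ (c : EReal) + J O := by
          apply add_le_add_right
          rw [hb]; exact h1
      _ ≤ convexIntegral J f := le_iSup (fun c' : ℝ => (c' : EReal) + J {x | (c' : EReal) < f x}) c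
  · intro h O hO
    classical
    set f : E → EReal := fun x => if x ∈ O then 0 else ⊥ with hfdef
    have hlsc : LowerSemicontinuous f := by
      intro x y hy
      by_cases hx : x ∈ O
      · simp only [hfdef, if_pos hx] at hy
        filter_upwards [hO.mem_nhds hx] with a ha
        simp [hfdef, ha, hy]
      · simp [hfdef, hx] at hy
    have hftop : ∀ x, f x ≠ ⊤ := by
      intro x; simp only [hfdef]; split <;> simp
    have key := h f hlsc hftop
    have lhs : -(⨅ x ∈ O, I x) ≤ ⨆ x : E, f x - I x := by
      rw [← EReal.ge_of_forall_gt_iff_ge]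
      intro z hz
      rw [EReal.lt_neg_comm] at hz
      obtain ⟨x, hx'⟩ := iInf_lt_iff.mp hz
      obtain ⟨hxO, hx⟩ := iInf_lt_iff.mp hx'
      have : (z : EReal) < f x - I x := by
        simp only [hfdef, if_pos hxO]
        rw [EReal.lt_neg_comm] at hx
        rwa [zero_sub]
      exact le_of_lt (lt_of_lt_of_le this (le_iSup (fun x => f x - I x) x))
    have rhs : convexIntegral J f ≤ J O := by
      refine iSup_le fun c => ?_
      by_cases hc : c < 0
      · have hset : {x | (c : EReal) < f x} = O := by
          ext x
          simp only [hfdef, mem_setOf_eq]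
          split
          · next hxO => simpa [hxO] using (show (c : EReal) < 0 by exact_mod_cast hc)
          · next hxO => simp [hxO]
        rw [hset]
        calc (c : EReal) + J O ≤ 0 + J O := by
              apply add_le_add_left
              exact_mod_cast hc.le
          _ = J O := zero_add _
      · have hset : {x | (c : EReal) < f x} = ∅ := by
          ext x
          simp only [hfdef, mem_setOf_eq, mem_empty_iff_false, iff_false, not_lt]
          split
          · exact_mod_cast (not_lt.mp hc)
          · exact bot_le
        rw [hset, hJempty, EReal.add_bot]
        exact bot_le
    exact le_trans lhs (le_trans key rhs)
end

section
/- Let E be a topological space and J a concentration on E. Let I : E → [0,∞]. Then the upper large-deviation bound J(C) ≤ -inf_{x∈C} I(x) holds for every closed set C ⊆ E if and only if the upper Laplace bound φ_J(f) ≤ sup_{x∈E}(f(x) - I(x)) holds for every upper semicontinuous function f : E → ℝ ∪ {-∞}. -/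
open Set

private lemma auxAdd {S : EReal} (c : ℝ) {T : EReal} (h : T ≤ S - (c : EReal)) :
    (c : EReal) + T ≤ S := by
  rw [add_comm]
  exact (EReal.le_sub_iff_add_le (Or.inl (EReal.coe_ne_bot c))
    (Or.inl (EReal.coe_ne_top c))).1 h

/-- Duality for the upper bounds: the upper large-deviation bound over closed sets holds
iff the upper Laplace bound over upper semicontinuous functions holds. -/
theorem stmt_10 {E : Type*} [TopologicalSpace E] [MeasurableSpace E] [BorelSpace E]
    (J : Set E → EReal)
    (hJempty : J ∅ = ⊥) (hJuniv : J univ = 0) (hJle : ∀ A : Set E, J A ≤ 0)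
    (hJmono : ∀ A B : Set E, MeasurableSet A → MeasurableSet B → A ⊆ B → J A ≤ J B)
    (I : E → EReal) (hI : ∀ x, 0 ≤ I x) :
    (∀ C : Set E, IsClosed C → J C ≤ -(⨅ x ∈ C, I x)) ↔
      (∀ f : E → EReal, UpperSemicontinuous f → (∀ x, f x ≠ ⊤) →
        convexIntegral J f ≤ ⨆ x : E, f x - I x) := by
  classical
  constructor
  · intro h f hf hftop
    refine iSup_le fun c => ?_
    set C : Set E := {x | (c : EReal) ≤ f x} with hCdef
    have hCclosed : IsClosed C := hf.isClosed_preimage (c : EReal)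
    have hAeq : {x | (c : EReal) < f x}
        = ⋃ n : ℕ, {x | ((c + ((n : ℝ) + 1)⁻¹ : ℝ) : EReal) ≤ f x} := by
      ext x
      simp only [mem_setOf_eq, mem_iUnion]
      constructor
      · intro hx
        have hfb : f x ≠ ⊥ := by
          intro hb
          rw [hb] at hx
          exact absurd hx (not_lt_bot)
        have hfr : ((f x).toReal : EReal) = f x := EReal.coe_toReal (hftop x) hfb
        set r := (f x).toReal
        rw [← hfr, EReal.coe_lt_coe_iff] at hx
        obtain ⟨n, hn⟩ := exists_nat_gt (r - c)⁻¹
        refine ⟨n, ?_⟩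
        rw [← hfr, EReal.coe_le_coe_iff]
        have h1 : (0 : ℝ) < r - c := by linarith
        have h2 : (r - c)⁻¹ < (n : ℝ) + 1 := hn.trans_le (by linarith)
        have h3 : ((n : ℝ) + 1)⁻¹ < r - c := by
          rw [inv_lt_comm₀ (by positivity) h1]
          exact h2
        linarith
      · rintro ⟨n, hn⟩
        refine lt_of_lt_of_le ?_ hn
        rw [EReal.coe_lt_coe_iff]
        have : (0 : ℝ) < ((n : ℝ) + 1)⁻¹ := by positivity
        linarith
    have hAmeas : MeasurableSet {x | (c : EReal) < f x} := by
      rw [hAeq]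
      exact MeasurableSet.iUnion fun n => (hf.isClosed_preimage _).measurableSet
    have hsub : {x | (c : EReal) < f x} ⊆ C := fun x (hx : (c : EReal) < f x) => (hx.le : (c : EReal) ≤ f x)
    have step1 : (c : EReal) + J {x | (c : EReal) < f x} ≤ (c : EReal) + J C :=
      add_le_add_right (hJmono _ _ hAmeas hCclosed.measurableSet hsub) _
    have step2 : (c : EReal) + J C ≤ (c : EReal) + -(⨅ x ∈ C, I x) :=
      add_le_add_right (h C hCclosed) _
    refine step1.trans (step2.trans ?_)
    apply auxAdd
    rw [EReal.neg_le]
    refine le_iInf₂ fun x hx => ?_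
    rw [EReal.neg_le, EReal.le_sub_iff_add_le (Or.inl (EReal.coe_ne_bot c))
      (Or.inl (EReal.coe_ne_top c))]
    calc -(I x) + (c : EReal) = (c : EReal) + -(I x) := add_comm _ _
      _ ≤ f x + -(I x) := add_le_add_left hx _
      _ = f x - I x := (sub_eq_add_neg _ _).symm
      _ ≤ ⨆ x : E, f x - I x := le_iSup (fun x : E => f x - I x) x
  · intro h C hC
    set f : E → EReal := fun x => if x ∈ C then 0 else ⊥ with hfdef
    have hUSC : UpperSemicontinuous f := by
      rw [upperSemicontinuous_iff_isOpen_preimage]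
      intro y
      by_cases hy : 0 < y
      · have : f ⁻¹' Iio y = univ := by
          ext x
          simp only [mem_preimage, mem_Iio, mem_univ, iff_true]
          by_cases hx : x ∈ C
          · simpa [f, hx] using hy
          · simp only [f, hx, if_neg]
            exact (bot_le : (⊥ : EReal) ≤ 0).trans_lt hy
        rw [this]; exact isOpen_univ
      · push_neg at hy
        by_cases hyb : y = ⊥
        · have : f ⁻¹' Iio y = ∅ := by
            ext x; simp [hyb]
          rw [this]; exact isOpen_empty
        · have hbl : (⊥ : EReal) < y := bot_lt_iff_ne_bot.2 hyb
          have : f ⁻¹' Iio y = Cᶜ := by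
            ext x
            simp only [mem_preimage, mem_Iio, mem_compl_iff]
            by_cases hx : x ∈ C
            · simpa [f, hx] using not_lt.2 hy
            · simpa [f, hx] using hbl
          rw [this]; exact hC.isOpen_compl
    have hftop : ∀ x, f x ≠ ⊤ := by
      intro x
      by_cases hx : x ∈ C <;> simp [f, hx]
    have hmain := h f hUSC hftop
    have hS : (⨆ x : E, f x - I x) ≤ -(⨅ x ∈ C, I x) := by
      refine iSup_le fun x => ?_
      by_cases hx : x ∈ C
      · have h1 : f x - I x = -(I x) := by
          simp [f, hx, sub_eq_add_neg]
        rw [h1]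
        exact EReal.neg_le_neg_iff.2 (iInf₂_le x hx)
      · have h1 : f x - I x = ⊥ := by
          simp [f, hx, sub_eq_add_neg]
        rw [h1]
        exact bot_le
    have hJC : J C ≤ convexIntegral J f := by
      refine le_of_forall_lt fun d hd => ?_
      obtain ⟨r, hdr, hrJ⟩ := EReal.exists_between_coe_real hd
      have hJtop : J C ≠ ⊤ := ((hJle C).trans_lt (by simp)).ne
      have hJbot : J C ≠ ⊥ := ((EReal.bot_lt_coe r).trans hrJ).ne'
      set s := (J C).toReal
      have hs : (s : EReal) = J C := EReal.coe_toReal hJtop hJbot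
      refine hdr.trans_le ?_
      unfold convexIntegral
      have hrs : r - s < 0 := by
        have : (r : EReal) < (s : EReal) := by rw [hs]; exact hrJ
        rw [EReal.coe_lt_coe_iff] at this
        linarith
      have hset : {x | ((r - s : ℝ) : EReal) < f x} = C := by
        ext x
        simp only [mem_setOf_eq]
        by_cases hx : x ∈ C
        · simp only [f, hx, if_pos, iff_true]
          exact_mod_cast hrs
        · simp only [f, hx, if_neg, iff_false]
          exact not_lt_bot
      have hle : ((r - s : ℝ) : EReal) + J {x | ((r - s : ℝ) : EReal) < f x}
          ≤ ⨆ c : ℝ, ((c : EReal) + J {x | (c : EReal) < f x}) :=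
        le_iSup (fun c : ℝ => (c : EReal) + J {x | (c : EReal) < f x}) (r - s)
      rw [hset, ← hs] at hle
      rwa [show ((r - s : ℝ) : EReal) + (s : EReal) = (r : EReal) by norm_cast; ring] at hle
    exact hJC.trans (hmain.trans hS)
end

section
/- Let E be a topological space, J a concentration on E, and define the minimal rate function I_min(x) := sup{ f(x) - φ_J(f) : f : E → ℝ ∪ {-∞} lower semicontinuous }. Then for every x ∈ E, -I_min(x) = inf{ J(U) : U open, x ∈ U }. -/
open Set

/-- Representation of the minimal rate function: for every `x`,
`-I_min(x) = inf { J(U) : U open, x ∈ U }`. -/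
theorem stmt_11 {E : Type*} [TopologicalSpace E] [MeasurableSpace E] [BorelSpace E]
    (J : Set E → EReal)
    (hJempty : J ∅ = ⊥) (hJuniv : J univ = 0) (hJle : ∀ A : Set E, J A ≤ 0)
    (hJmono : ∀ A B : Set E, MeasurableSet A → MeasurableSet B → A ⊆ B → J A ≤ J B)
    (x : E) :
    -(⨆ f ∈ {f : E → EReal | LowerSemicontinuous f ∧ ∀ y, f y ≠ ⊤},
        (f x - convexIntegral J f)) =
      ⨅ U ∈ {U : Set E | IsOpen U ∧ x ∈ U}, J U := by
  classical
  apply le_antisymm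
  · -- `-(sup) ≤ inf`
    refine le_iInf fun U => le_iInf fun hU => ?_
    rw [EReal.neg_le]
    set g : E → EReal := fun y => if y ∈ U then (0 : EReal) else ⊥ with hg
    have hglsc : LowerSemicontinuous g := by
      intro y c hc
      by_cases hy : y ∈ U
      · have h0 : c < (0 : EReal) := by simpa [hg, hy] using hc
        filter_upwards [hU.1.mem_nhds hy] with z hz
        simpa [hg, hz] using h0
      · simp [hg, hy] at hc
    have hgtop : ∀ y, g y ≠ ⊤ := by
      intro y; by_cases hy : y ∈ U <;> simp [hg, hy]
    have hφ : convexIntegral J g ≤ J U := by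
      refine iSup_le fun c => ?_
      by_cases hc : (c : EReal) < 0
      · have hset : {y | (c : EReal) < g y} = U := by
          ext y; by_cases hy : y ∈ U <;> simp [hg, hy, hc]
        rw [hset]
        calc (c : EReal) + J U ≤ 0 + J U := add_le_add_left hc.le _
          _ = J U := zero_add _
      · have hset : {y | (c : EReal) < g y} = ∅ := by
          ext y
          simp only [mem_setOf_eq, mem_empty_iff_false, iff_false]
          by_cases hy : y ∈ U
          · simp only [hg, hy, if_true]; exact hc
          · simp [hg, hy]
        rw [hset, hJempty, EReal.add_bot]
        exact bot_le
    refine le_trans ?_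
      (le_iSup₂ (f := fun f (_ : f ∈ {f : E → EReal | LowerSemicontinuous f ∧ ∀ y, f y ≠ ⊤}) =>
        f x - convexIntegral J f) g ⟨hglsc, hgtop⟩)
    have hgx : g x = 0 := by simp [hg, hU.2]
    rw [hgx, zero_sub]
    exact EReal.neg_le_neg_iff.2 hφ
  · -- `inf ≤ -(sup)`
    refine EReal.le_neg_of_le_neg (iSup_le fun f => iSup_le fun hf => ?_)
    have hL0 : (⨅ U ∈ {U : Set E | IsOpen U ∧ x ∈ U}, J U) ≤ 0 :=
      le_trans (iInf₂_le univ ⟨isOpen_univ, mem_univ x⟩) hJuniv.le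
    by_cases hfx : f x = ⊥
    · rw [hfx, EReal.bot_sub]; exact bot_le
    by_cases hLbot : (⨅ U ∈ {U : Set E | IsOpen U ∧ x ∈ U}, J U) = ⊥
    · rw [hLbot, EReal.neg_bot]; exact le_top
    lift f x to ℝ using ⟨hf.2 x, hfx⟩ with r hr
    lift (⨅ U ∈ {U : Set E | IsOpen U ∧ x ∈ U}, J U) to ℝ using
      ⟨ne_top_of_le_ne_top (by simp) hL0, hLbot⟩ with l hl
    have hkey : (r : EReal) + (l : EReal) ≤ convexIntegral J f := by
      refine EReal.add_le_of_forall_lt fun a ha b hb => ?_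
      induction a using EReal.rec with
      | bot => rw [EReal.bot_add]; exact bot_le
      | top => exact absurd ha (by simp)
      | coe c =>
        have hU : IsOpen {y | (c : EReal) < f y} := hf.1.isOpen_preimage c
        have hxU : x ∈ {y | (c : EReal) < f y} := by
          show (c : EReal) < f x
          rw [← hr]; exact ha
        have hLU : (l : EReal) ≤ J {y | (c : EReal) < f y} := by
          rw [hl]
          exact iInf₂_le _ ⟨hU, hxU⟩
        calc (c : EReal) + b ≤ (c : EReal) + J {y | (c : EReal) < f y} :=
              add_le_add_right (hb.le.trans hLU) _
          _ ≤ convexIntegral J f :=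
              le_iSup (fun c : ℝ => (c : EReal) + J {x | (c : EReal) < f x}) c
    calc (r : EReal) - convexIntegral J f ≤ (r : EReal) - ((r : EReal) + (l : EReal)) :=
          EReal.sub_le_sub le_rfl hkey
      _ = -(l : EReal) := by norm_cast; ring
end

section
/- Let E be a topological space and φ : B(E) → [-∞,∞] a monetary risk measure, i.e., φ(0) = 0, φ is monotone (f ≤ g implies φ(f) ≤ φ(g)), and translation invariant (φ(f + c) = φ(f) + c for real c). If f is a Borel function such that φ(tf) < ∞ for some t > 1, then lim_{m→∞} φ( f·1_{{f ≥ m}} - ∞·1_{{f < m}} ) = -∞, where f·1_A - ∞·1_{A^c} denotes the function equal to f on A and -∞ off A. -/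
open Set Filter Topology
open scoped Classical

/-- Tail estimate for monetary risk measures: if `φ` is a monetary risk measure on Borel
functions and `φ(t f) < ∞` for some `t > 1`, then
`φ(f·1_{{f ≥ m}} - ∞·1_{{f < m}}) → -∞` as `m → ∞`. -/
theorem stmt_13 {E : Type*} [TopologicalSpace E] [MeasurableSpace E] [BorelSpace E]
    (φ : (E → EReal) → EReal)
    (hN : φ (fun _ => 0) = 0)
    (hM : ∀ f g : E → EReal, Measurable f → Measurable g → (∀ x, f x ≤ g x) → φ f ≤ φ g)
    (hT : ∀ (f : E → EReal) (c : ℝ), Measurable f → φ (fun x => f x + (c : EReal)) = φ f + (c : EReal))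
    (f : E → EReal) (hf : Measurable f) (hftop : ∀ x, f x ≠ ⊤)
    (ht : ∃ t : ℝ, 1 < t ∧ φ (fun x => (t : EReal) * f x) < ⊤) :
    Filter.Tendsto (fun m : ℕ => φ (fun x => if (m : EReal) ≤ f x then f x else ⊥))
      Filter.atTop (nhds ⊥) := by
  obtain ⟨t, ht1, htφ⟩ := ht
  have htf_meas : Measurable fun x => (t : EReal) * f x := by
    have hmono : Monotone fun y : EReal => (t : EReal) * y := fun a b hab =>
      mul_le_mul_of_nonneg_left hab (by exact_mod_cast (by linarith : (0:ℝ) ≤ t))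
    exact hmono.measurable.comp hf
  -- key bound: φ(g_m) ≤ φ(tf) + (1-t)*m
  have key : ∀ m : ℕ,
      φ (fun x => if (m : EReal) ≤ f x then f x else ⊥)
        ≤ φ (fun x => (t : EReal) * f x) + (((1 - t) * m : ℝ) : EReal) := by
    intro m
    have hle : ∀ x, (if (m : EReal) ≤ f x then f x else ⊥)
        ≤ (t : EReal) * f x + (((1 - t) * m : ℝ) : EReal) := by
      intro x
      by_cases h : (m : EReal) ≤ f x
      · simp only [h, if_true]
        have hbot : f x ≠ ⊥ := by
          intro hb
          rw [hb, le_bot_iff] at h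
          exact EReal.natCast_ne_bot m h
        lift f x to ℝ using ⟨hftop x, hbot⟩ with r hr
        have hmr : (m : ℝ) ≤ r := by
          rw [show ((m : EReal)) = (((m : ℝ) : EReal)) by norm_cast,
            EReal.coe_le_coe_iff] at h
          exact h
        have : (r : ℝ) ≤ t * r + (1 - t) * m := by nlinarith
        calc (r : EReal) ≤ ((t * r + (1 - t) * m : ℝ) : EReal) := by exact_mod_cast this
          _ = (t : EReal) * (r : EReal) + (((1 - t) * m : ℝ) : EReal) := by
              rw [EReal.coe_add, EReal.coe_mul]
      · simp only [h, if_false]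
        exact bot_le
    have hgmeas : Measurable fun x => if (m : EReal) ≤ f x then f x else ⊥ :=
      Measurable.ite (measurableSet_le measurable_const hf) hf measurable_const
    have h2 : Measurable fun x => (t : EReal) * f x + (((1 - t) * m : ℝ) : EReal) := by
      have hmono : Monotone fun y : EReal => y + (((1 - t) * m : ℝ) : EReal) := fun a b hab =>
        add_le_add_left hab _
      exact hmono.measurable.comp htf_meas
    calc φ (fun x => if (m : EReal) ≤ f x then f x else ⊥)
        ≤ φ (fun x => (t : EReal) * f x + (((1 - t) * m : ℝ) : EReal)) :=
          hM _ _ hgmeas h2 hle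
      _ = φ (fun x => (t : EReal) * f x) + (((1 - t) * m : ℝ) : EReal) :=
          hT _ _ htf_meas
  -- the upper bound tends to ⊥
  have hcb : Tendsto (fun m : ℕ => (((1 - t) * m : ℝ) : EReal)) atTop (nhds ⊥) := by
    rw [EReal.tendsto_nhds_bot_iff_real]
    intro x
    have hrb : Tendsto (fun m : ℕ => (1 - t) * (m : ℝ)) atTop atBot :=
      Tendsto.const_mul_atTop_of_neg (by linarith) tendsto_natCast_atTop_atTop
    filter_upwards [hrb.eventually (eventually_lt_atBot x)] with m hm
    exact_mod_cast hm
  have hbound : Tendsto (fun m : ℕ =>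
      φ (fun x => (t : EReal) * f x) + (((1 - t) * m : ℝ) : EReal)) atTop (nhds ⊥) := by
    have hc : ContinuousAt (fun p : EReal × EReal => p.1 + p.2)
        (φ (fun x => (t : EReal) * f x), ⊥) :=
      EReal.continuousAt_add (Or.inl htφ.ne) (Or.inr (by simp))
    have := hc.tendsto.comp
      (show Tendsto (fun m : ℕ =>
          (φ (fun x => (t : EReal) * f x), (((1 - t) * m : ℝ) : EReal)))
          atTop (nhds (φ (fun x => (t : EReal) * f x), ⊥)) by
        rw [nhds_prod_eq]
        exact tendsto_const_nhds.prodMk hcb)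
    simpa [EReal.add_bot, Function.comp_def] using this
  exact tendsto_nhds_bot_mono' hbound key
end

section
/- Let E be a topological space and φ : B(E) → [-∞,∞] a maxitive monetary risk measure, with associated concentration J(A) = φ(-∞·1_{A^c}). Then φ(f) = φ_J(f) = sup_{c∈ℝ}(c + J({f > c})) for every Borel function f : E → ℝ ∪ {-∞} that is bounded from above. -/
open Set
open scoped Classical

/-- The function equal to `0` on `A` and `-∞` on `Aᶜ`. -/
noncomputable def botIndicator {E : Type*} (A : Set E) : E → EReal :=
  fun x => if x ∈ A then (0 : EReal) else ⊥

/-- Representation of a maxitive monetary risk measure as a convex integral on functions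
bounded from above: `φ(f) = sup_c (c + J({f > c}))` where `J(A) = φ(-∞·1_{A^c})`. -/
theorem stmt_15 {E : Type*} [TopologicalSpace E] [MeasurableSpace E] [BorelSpace E]
    (φ : (E → EReal) → EReal)
    (hN : φ (fun _ => 0) = 0)
    (hM : ∀ f g : E → EReal, Measurable f → Measurable g → (∀ x, f x ≤ g x) → φ f ≤ φ g)
    (hT : ∀ (f : E → EReal) (c : ℝ), Measurable f → φ (fun x => f x + (c : EReal)) = φ f + (c : EReal))
    (hmax : ∀ f g : E → EReal, Measurable f → Measurable g → φ (fun x => f x ⊔ g x) ≤ φ f ⊔ φ g)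
    (f : E → EReal) (hf : Measurable f) (hbdd : ∃ c : ℝ, ∀ x, f x ≤ (c : EReal)) :
    φ f = ⨆ c : ℝ, ((c : EReal) + φ (botIndicator {x | (c : EReal) < f x})) := by
  -- notation
  set S : EReal := ⨆ c : ℝ, ((c : EReal) + φ (botIndicator {x | (c : EReal) < f x})) with hS
  -- measurability of botIndicator of level sets
  have hmeasSet : ∀ (g : E → EReal), Measurable g → ∀ c : ℝ,
      MeasurableSet {x | (c : EReal) < g x} := fun g hg c => hg measurableSet_Ioi
  have hmeasBI : ∀ (A : Set E), MeasurableSet A → Measurable (botIndicator A) := by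
    intro A hA
    exact Measurable.ite hA measurable_const measurable_const
  -- φ of a constant
  have hconst : ∀ a : ℝ, φ (fun _ => (a : EReal)) = (a : EReal) := by
    intro a
    have := hT (fun _ => 0) a measurable_const
    simpa [hN] using this
  -- Lower bound:  ∀ c, c + J(c) ≤ φ f
  have hlow : ∀ c : ℝ, (c : EReal) + φ (botIndicator {x | (c : EReal) < f x}) ≤ φ f := by
    intro c
    set A := {x | (c : EReal) < f x} with hA
    have hAm : MeasurableSet A := hmeasSet f hf c
    have hBI : Measurable (botIndicator A) := hmeasBI A hAm
    have hsum : φ (fun x => botIndicator A x + (c : EReal)) = φ (botIndicator A) + c :=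
      hT _ c hBI
    have hle : ∀ x, botIndicator A x + (c : EReal) ≤ f x := by
      intro x
      by_cases hx : x ∈ A
      · simp only [botIndicator, if_pos hx, zero_add]
        exact le_of_lt hx
      · simp [botIndicator, if_neg hx]
    have hmeas2 : Measurable (fun x => botIndicator A x + (c : EReal)) := by
      have : (fun x => botIndicator A x + (c : EReal)) =
          fun x => if x ∈ A then (c : EReal) else ⊥ := by
        funext x
        by_cases hx : x ∈ A <;> simp [botIndicator, hx]
      rw [this]
      exact Measurable.ite hAm measurable_const measurable_const
    have := hM _ f hmeas2 hf hle
    rw [hsum] at this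
    calc (c : EReal) + φ (botIndicator A) = φ (botIndicator A) + c := add_comm _ _
      _ ≤ φ f := this
  -- Upper bound
  have hup : φ f ≤ S := by
    obtain ⟨b₀, hb₀⟩ := hbdd
    -- Key induction: subdivision of [a, b]
    have key : ∀ (a δ : ℝ), 0 < δ → ∀ n : ℕ, ∀ g : E → EReal, Measurable g →
        (∀ x, g x ≤ f x) → ∀ b : ℝ, b ≤ a + n * δ → (∀ x, g x ≤ (b : EReal)) →
        φ g ≤ (S + (δ : EReal)) ⊔ (a : EReal) := by
      intro a δ hδ n
      induction n with
      | zero =>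
        intro g hg hgf b hb hgb
        have hba : b ≤ a := by simpa using hb
        have : ∀ x, g x ≤ (a : EReal) := fun x =>
          le_trans (hgb x) (by exact_mod_cast hba)
        have h1 : φ g ≤ φ (fun _ => (a : EReal)) :=
          hM g _ hg measurable_const this
        rw [hconst a] at h1
        exact le_trans h1 le_sup_right
      | succ n ih =>
        intro g hg hgf b hb hgb
        set c : ℝ := b - δ with hc
        set A := {x | (c : EReal) < g x} with hA
        have hAm : MeasurableSet A := hmeasSet g hg c
        set g1 : E → EReal := fun x => if (c : EReal) < g x then (b : EReal) else ⊥ with hg1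
        set g2 : E → EReal := fun x => min (g x) (c : EReal) with hg2
        have hg1m : Measurable g1 := Measurable.ite hAm measurable_const measurable_const
        have hg2m : Measurable g2 := hg.min measurable_const
        have hsplit : ∀ x, g x ≤ g1 x ⊔ g2 x := by
          intro x
          by_cases hx : (c : EReal) < g x
          · refine le_trans ?_ le_sup_left
            simp only [hg1, if_pos hx]
            exact hgb x
          · push_neg at hx
            refine le_trans ?_ le_sup_right
            simp [hg2, hx]
        have h1 : φ g ≤ φ (fun x => g1 x ⊔ g2 x) :=
          hM g _ hg (hg1m.max hg2m) hsplit
        have h2 : φ (fun x => g1 x ⊔ g2 x) ≤ φ g1 ⊔ φ g2 := hmax g1 g2 hg1m hg2m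
        -- bound φ g1
        have hbc : (b : EReal) = (c : EReal) + (δ : EReal) := by
          rw [← EReal.coe_add]; norm_num [hc]
        have hg1eq : g1 = fun x => botIndicator A x + (b : EReal) := by
          funext x
          by_cases hx : (c : EReal) < g x
          · have hxA : x ∈ A := hx
            simp [hg1, botIndicator, hxA, hx]
          · have hxA : x ∉ A := hx
            simp [hg1, botIndicator, hxA, hx, EReal.bot_add]
        have hφg1 : φ g1 = φ (botIndicator A) + (b : EReal) := by
          rw [hg1eq]; exact hT _ b (hmeasBI A hAm)
        have hsub : ∀ x, botIndicator A x ≤ botIndicator {x | (c : EReal) < f x} x := by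
          intro x
          by_cases hx : x ∈ A
          · have : (c : EReal) < f x := lt_of_lt_of_le hx (hgf x)
            simp [botIndicator, hx, this]
          · simp [botIndicator, hx]
        have hJ : φ (botIndicator A) ≤ φ (botIndicator {x | (c : EReal) < f x}) :=
          hM _ _ (hmeasBI A hAm) (hmeasBI _ (hmeasSet f hf c)) hsub
        have hg1le : φ g1 ≤ S + (δ : EReal) := by
          rw [hφg1, hbc]
          have h3 : φ (botIndicator A) + ((c : EReal) + (δ : EReal)) =
              ((c : EReal) + φ (botIndicator A)) + (δ : EReal) := by
            rw [← add_assoc, add_comm (φ (botIndicator A)) (c : EReal)]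
          rw [h3]
          refine add_le_add ?_ le_rfl
          refine le_trans (add_le_add le_rfl hJ) ?_
          exact le_iSup (fun c : ℝ => (c : EReal) + φ (botIndicator {x | (c : EReal) < f x})) c
        -- bound φ g2 by induction hypothesis
        have hg2f : ∀ x, g2 x ≤ f x := fun x => le_trans (min_le_left _ _) (hgf x)
        have hcb : c ≤ a + n * δ := by
          have : b ≤ a + (n + 1) * δ := by exact_mod_cast hb
          simp only [hc]; nlinarith
        have hg2b : ∀ x, g2 x ≤ (c : EReal) := fun x => min_le_right _ _
        have hφg2 : φ g2 ≤ (S + (δ : EReal)) ⊔ (a : EReal) :=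
          ih g2 hg2m hg2f c hcb hg2b
        calc φ g ≤ φ g1 ⊔ φ g2 := le_trans h1 h2
          _ ≤ (S + (δ : EReal)) ⊔ ((S + (δ : EReal)) ⊔ (a : EReal)) :=
            sup_le_sup hg1le hφg2
          _ = (S + (δ : EReal)) ⊔ (a : EReal) := by rw [← sup_assoc, sup_idem]
    -- For all a and δ > 0 : φ f ≤ (S + δ) ⊔ a
    have step1 : ∀ (a δ : ℝ), 0 < δ → φ f ≤ (S + (δ : EReal)) ⊔ (a : EReal) := by
      intro a δ hδ
      obtain ⟨n, hn⟩ := exists_nat_ge ((b₀ - a) / δ)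
      have hb : b₀ ≤ a + n * δ := by
        have := (div_le_iff₀ hδ).mp hn
        linarith
      exact key a δ hδ n f hf (fun x => le_rfl) b₀ hb hb₀
    -- remove a
    have step2 : ∀ δ : ℝ, 0 < δ → φ f ≤ S + (δ : EReal) := by
      intro δ hδ
      by_contra h
      push_neg at h
      have hall : ∀ a : ℝ, φ f ≤ (a : EReal) := by
        intro a
        have := step1 a δ hδ
        rcases le_or_gt (φ f) (a : EReal) with h' | h'
        · exact h'
        · exfalso
          rcases le_or_gt (φ f) (S + (δ : EReal)) with h'' | h''
          · exact absurd h'' (not_le.mpr h)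
          · exact absurd this (not_le.mpr (by simp [lt_sup_iff] at *; exact ⟨h'', h'⟩))
      have : φ f = ⊥ := by
        by_contra hbot
        have hlt : (⊥ : EReal) < φ f := Ne.bot_lt hbot
        obtain ⟨a, _, ha2⟩ := EReal.exists_between_coe_real hlt
        exact absurd (hall a) (not_le.mpr ha2)
      rw [this] at h
      exact absurd bot_le (not_le.mpr h)
    -- remove δ
    by_contra h
    push_neg at h
    rcases eq_top_or_lt_top S with hb | hb
    · rw [hb] at h; exact absurd le_top (not_le.mpr h)
    rcases eq_bot_or_bot_lt S with hb' | hb'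
    · have := step2 1 one_pos
      rw [hb', EReal.bot_add] at this
      rw [hb'] at h
      exact absurd this (not_le.mpr (lt_of_le_of_lt bot_le h))
    · -- S is a real number
      obtain ⟨s, hs⟩ : ∃ s : ℝ, S = (s : EReal) := by
        lift S to ℝ using ⟨hb.ne, hb'.ne'⟩ with s
        exact ⟨s, rfl⟩
      obtain ⟨a, ha1, ha2⟩ := EReal.exists_between_coe_real h
      have := step2 (a - s) (by
        have : (s : EReal) < (a : EReal) := hs ▸ ha1
        have : s < a := by exact_mod_cast this
        linarith)
      rw [hs, ← EReal.coe_add] at this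
      have : φ f ≤ ((a : ℝ) : EReal) := by
        convert this using 2; ring
      exact absurd this (not_le.mpr ha2)
  exact le_antisymm hup (iSup_le hlow)
end

section
/- Let E be a topological space, (𝓔_n) a sequence of sublinear expectations on nonnegative Borel functions on E, and define ψ̄(f) := limsup_{n→∞} (1/n) log 𝓔_n(e^{nf}) for Borel f : E → ℝ ∪ {-∞}. Then ψ̄ is weakly maxitive: for every upper semicontinuous f and lower semicontinuous g_1,...,g_N with f ≤ g_1 ∨ ... ∨ g_N pointwise, one has ψ̄(f) ≤ max_{1≤i≤N} ψ̄(g_i). -/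
open Set Filter ENNReal

/-- The upper asymptotic entropy of a sequence of sublinear expectations. -/
noncomputable def upperEntropy {E : Type*} (𝓔 : ℕ → (E → ℝ≥0∞) → ℝ≥0∞) (f : E → EReal) : EReal :=
  Filter.limsup
    (fun n : ℕ => (((n : ℝ)⁻¹ : ℝ) : EReal) *
      ENNReal.log (𝓔 n (fun x => EReal.exp (((n : ℝ) : EReal) * f x))))
    Filter.atTop

/-- limsup of a finite supremum is at most the supremum of the limsups. -/
lemma limsup_iSup_fin_le {N : ℕ} (u : Fin N → ℕ → EReal) :
    Filter.limsup (fun n => ⨆ i, u i n) Filter.atTop ≤ ⨆ i, Filter.limsup (u i) Filter.atTop := by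
  refine (Filter.limsup_le_iff).2 fun y hy => ?_
  have h : ∀ i, ∀ᶠ n in Filter.atTop, u i n < y := fun i =>
    Filter.eventually_lt_of_limsup_lt (lt_of_le_of_lt (le_iSup (fun j => Filter.limsup (u j) Filter.atTop) i) hy)
  filter_upwards [Filter.eventually_all.2 h] with n hn
  rcases isEmpty_or_nonempty (Fin N) with hN | hN
  · have h1 : (⨆ i, u i n) = ⊥ := by simp
    have h2 : (⨆ i, Filter.limsup (u i) Filter.atTop) = (⊥ : EReal) := by simp
    rw [h1]
    exact lt_of_le_of_lt bot_le (h2 ▸ hy)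
  · obtain ⟨i₀, hi₀⟩ := Finite.exists_max (fun i => u i n)
    exact lt_of_le_of_lt (iSup_le hi₀) (hn i₀)

/-- distributivity of multiplication by a positive real over `real + ereal`. -/
lemma ereal_mul_add_of_real {c a : ℝ} (hc : 0 < c) (b : EReal) :
    (c : EReal) * ((a : EReal) + b) = (c : EReal) * (a : EReal) + (c : EReal) * b := by
  induction b with
  | bot =>
      rw [EReal.add_bot, EReal.coe_mul_bot_of_pos hc, EReal.add_bot]
  | coe x =>
      norm_cast
      ring
  | top =>
      rw [EReal.add_top_of_ne_bot (by simp), EReal.coe_mul_top_of_pos hc,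
        EReal.add_top_of_ne_bot (by rw [← EReal.coe_mul]; exact EReal.coe_ne_bot _)]

/-- finite subadditivity for a sublinear expectation. -/
lemma E_finset_sum_le {E : Type*} [MeasurableSpace E] (𝓔 : (E → ℝ≥0∞) → ℝ≥0∞)
    (hzero : 𝓔 (fun _ => 0) = 0)
    (hsubadd : ∀ f g : E → ℝ≥0∞, Measurable f → Measurable g →
      (∀ x, f x ≠ ⊤) → (∀ x, g x ≠ ⊤) → 𝓔 (fun x => f x + g x) ≤ 𝓔 f + 𝓔 g)
    {ι : Type*} (s : Finset ι) (F : ι → E → ℝ≥0∞)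
    (hmeas : ∀ i, Measurable (F i)) (hfin : ∀ i x, F i x ≠ ⊤) :
    𝓔 (fun x => ∑ i ∈ s, F i x) ≤ ∑ i ∈ s, 𝓔 (F i) := by
  classical
  induction s using Finset.induction with
  | empty => simpa using le_of_eq hzero
  | insert a s hnot ih =>
      have hsm : Measurable (fun x => ∑ i ∈ s, F i x) :=
        Finset.measurable_sum _ (fun i _ => hmeas i)
      have hsf : ∀ x, (∑ i ∈ s, F i x) ≠ ⊤ := fun x =>
        (ENNReal.sum_lt_top.2 fun i _ => lt_top_iff_ne_top.2 (hfin i x)).ne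
      calc 𝓔 (fun x => ∑ i ∈ insert a s, F i x)
          = 𝓔 (fun x => F a x + ∑ i ∈ s, F i x) := by
            congr 1; funext x; rw [Finset.sum_insert hnot]
        _ ≤ 𝓔 (F a) + 𝓔 (fun x => ∑ i ∈ s, F i x) :=
            hsubadd _ _ (hmeas a) hsm (hfin a) hsf
        _ ≤ 𝓔 (F a) + ∑ i ∈ s, 𝓔 (F i) := add_le_add_right ih _
        _ = ∑ i ∈ insert a s, 𝓔 (F i) := (Finset.sum_insert (f := fun i => 𝓔 (F i)) hnot).symm

/-- The upper asymptotic entropy `ψ̄(f) = limsup (1/n) log 𝓔_n(e^{nf})` of a sequence of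
sublinear expectations is weakly maxitive: if `f` is upper semicontinuous,
`g 1, …, g N` are lower semicontinuous and `f ≤ g 1 ∨ ⋯ ∨ g N` pointwise, then
`ψ̄(f) ≤ max_i ψ̄(g i)`. -/
theorem stmt_18 {E : Type*} [TopologicalSpace E] [MeasurableSpace E] [BorelSpace E]
    (𝓔 : ℕ → (E → ℝ≥0∞) → ℝ≥0∞)
    (hconst : ∀ (n : ℕ) (c : ℝ≥0∞), c ≠ ⊤ → 𝓔 n (fun _ => c) = c)
    (hmono : ∀ (n : ℕ) (f g : E → ℝ≥0∞), Measurable f → Measurable g →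
      (∀ x, f x ≠ ⊤) → (∀ x, g x ≠ ⊤) → (∀ x, f x ≤ g x) → 𝓔 n f ≤ 𝓔 n g)
    (hsubadd : ∀ (n : ℕ) (f g : E → ℝ≥0∞), Measurable f → Measurable g →
      (∀ x, f x ≠ ⊤) → (∀ x, g x ≠ ⊤) → 𝓔 n (fun x => f x + g x) ≤ 𝓔 n f + 𝓔 n g)
    (hhom : ∀ (n : ℕ) (a : ℝ≥0∞) (f : E → ℝ≥0∞), a ≠ ⊤ → Measurable f → (∀ x, f x ≠ ⊤) →
      𝓔 n (fun x => a * f x) = a * 𝓔 n f)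
    (N : ℕ) (f : E → EReal) (g : Fin N → E → EReal)
    (hf : UpperSemicontinuous f) (hftop : ∀ x, f x ≠ ⊤)
    (hg : ∀ i, LowerSemicontinuous (g i)) (hgtop : ∀ i x, g i x ≠ ⊤)
    (hle : ∀ x, f x ≤ ⨆ i, g i x) :
    upperEntropy 𝓔 f ≤ ⨆ i, upperEntropy 𝓔 (g i) := by
  classical
  set ψ : (E → EReal) → ℕ → EReal := fun h n =>
    (((n : ℝ)⁻¹ : ℝ) : EReal) *
      ENNReal.log (𝓔 n (fun x => EReal.exp (((n : ℝ) : EReal) * h x))) with hψ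
  rcases Nat.eq_zero_or_pos N with rfl | hN
  · -- N = 0 : f ≡ ⊥ and the LHS is ⊥
    have hfbot : ∀ x, f x = ⊥ := fun x => le_bot_iff.1 (by simpa using hle x)
    have hev : ψ f =ᶠ[Filter.atTop] fun _ => (⊥ : EReal) := by
      filter_upwards [Filter.eventually_ge_atTop 1] with n hn
      have hn0 : (0 : ℝ) < (n : ℝ) := by exact_mod_cast hn
      have h1 : (fun x => EReal.exp (((n : ℝ) : EReal) * f x)) = fun _ => (0 : ℝ≥0∞) := by
        funext x
        rw [hfbot x, EReal.mul_bot_of_pos (by exact_mod_cast hn0), EReal.exp_bot]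
      simp only [hψ, h1, hconst n 0 (by simp), ENNReal.log_zero]
      exact EReal.coe_mul_bot_of_pos (by positivity)
    have : upperEntropy 𝓔 f ≤ ⊥ := by
      rw [show upperEntropy 𝓔 f = Filter.limsup (ψ f) Filter.atTop from rfl,
        Filter.limsup_congr hev]
      simp
    exact this.trans bot_le
  · haveI : Nonempty (Fin N) := Fin.pos_iff_nonempty.mp hN
    set L : ℝ := Real.log N with hL
    set U : ℕ → EReal := fun n => (((n : ℝ)⁻¹ * L : ℝ) : EReal) with hU
    set V : ℕ → EReal := fun n => ⨆ i, ψ (g i) n with hV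
    have hfm : Measurable f := hf.measurable
    have hgm : ∀ i, Measurable (g i) := fun i => (hg i).measurable
    -- the key eventual bound
    have key : ∀ᶠ n in Filter.atTop, ψ f n ≤ U n + V n := by
      filter_upwards [Filter.eventually_ge_atTop 1] with n hn
      have hn0 : (0 : ℝ) < (n : ℝ) := by exact_mod_cast hn
      have hcpos : (0 : ℝ) < (n : ℝ)⁻¹ := by positivity
      set F : Fin N → E → ℝ≥0∞ := fun i x => (EReal.exp (g i x)) ^ n with hF
      have hcast : ((n : ℝ) : EReal) = ((n : ℕ) : EReal) := by norm_cast
      have hFm : ∀ i, Measurable (F i) := fun i =>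
        (EReal.measurable_exp.comp (hgm i)).pow_const n
      have hFfin : ∀ i x, F i x ≠ ⊤ := fun i x =>
        ENNReal.pow_ne_top (fun h => hgtop i x (EReal.exp_eq_top_iff.1 h))
      have hEg : ∀ i, 𝓔 n (fun x => EReal.exp (((n : ℝ) : EReal) * g i x)) = 𝓔 n (F i) := by
        intro i; congr 1; funext x; rw [hcast, EReal.exp_nmul]
      have hEf : (fun x => EReal.exp (((n : ℝ) : EReal) * f x))
          = fun x => (EReal.exp (f x)) ^ n := by
        funext x; rw [hcast, EReal.exp_nmul]
      have hffm : Measurable (fun x => (EReal.exp (f x)) ^ n) :=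
        (EReal.measurable_exp.comp hfm).pow_const n
      have hfffin : ∀ x, (EReal.exp (f x)) ^ n ≠ ⊤ := fun x =>
        ENNReal.pow_ne_top (fun h => hftop x (EReal.exp_eq_top_iff.1 h))
      have hsumm : Measurable (fun x => ∑ i, F i x) :=
        Finset.measurable_sum _ (fun i _ => hFm i)
      have hsumfin : ∀ x, (∑ i, F i x) ≠ ⊤ := fun x =>
        (ENNReal.sum_lt_top.2 fun i _ => lt_top_iff_ne_top.2 (hFfin i x)).ne
      have hpt : ∀ x, (EReal.exp (f x)) ^ n ≤ ∑ i, F i x := by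
        intro x
        obtain ⟨i₀, hi₀⟩ := Finite.exists_max (fun i => g i x)
        have h1 : f x ≤ g i₀ x := (hle x).trans (iSup_le hi₀)
        calc (EReal.exp (f x)) ^ n ≤ (EReal.exp (g i₀ x)) ^ n :=
              pow_le_pow_left₀ zero_le (EReal.exp_monotone h1) n
          _ ≤ ∑ i, F i x := Finset.single_le_sum (f := fun i => F i x) (fun i _ => zero_le) (Finset.mem_univ i₀)
      set B : ℝ≥0∞ := ⨆ i, 𝓔 n (F i) with hB
      have step1 : 𝓔 n (fun x => (EReal.exp (f x)) ^ n) ≤ ∑ i, 𝓔 n (F i) :=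
        (hmono n _ _ hffm hsumm hfffin hsumfin hpt).trans
          (E_finset_sum_le (𝓔 n) (hconst n 0 (by simp)) (hsubadd n) Finset.univ F hFm hFfin)
      have step2 : ∑ i, 𝓔 n (F i) ≤ (N : ℝ≥0∞) * B := by
        calc ∑ i, 𝓔 n (F i) ≤ ∑ _i : Fin N, B :=
              Finset.sum_le_sum (fun i _ => le_iSup (fun j => 𝓔 n (F j)) i)
          _ = (N : ℝ≥0∞) * B := by
              simp [Finset.sum_const, nsmul_eq_mul, Finset.card_univ]
      have hlogN : ENNReal.log ((N : ℝ≥0∞)) = (L : EReal) := by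
        rw [ENNReal.log_pos_real' (by simpa using hN)]
        simp [hL]
      have hlog : ENNReal.log (𝓔 n (fun x => EReal.exp (((n : ℝ) : EReal) * f x)))
          ≤ (L : EReal) + ENNReal.log B := by
        rw [hEf]
        refine (ENNReal.log_monotone (step1.trans step2)).trans ?_
        rw [ENNReal.log_mul_add, hlogN]
      obtain ⟨i₁, hi₁⟩ := Finite.exists_max (fun i => 𝓔 n (F i))
      have hBeq : B = 𝓔 n (F i₁) := le_antisymm (iSup_le hi₁) (le_iSup (fun j => 𝓔 n (F j)) i₁)
      have hlast : (((n : ℝ)⁻¹ : ℝ) : EReal) * ENNReal.log B ≤ V n := by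
        rw [hBeq, ← hEg i₁]
        exact le_iSup (fun i => ψ (g i) n) i₁
      calc ψ f n = (((n : ℝ)⁻¹ : ℝ) : EReal) *
            ENNReal.log (𝓔 n (fun x => EReal.exp (((n : ℝ) : EReal) * f x))) := rfl
        _ ≤ (((n : ℝ)⁻¹ : ℝ) : EReal) * ((L : EReal) + ENNReal.log B) :=
            mul_le_mul_of_nonneg_left hlog (by exact_mod_cast hcpos.le)
        _ = U n + (((n : ℝ)⁻¹ : ℝ) : EReal) * ENNReal.log B := by
            rw [ereal_mul_add_of_real hcpos, hU]
            norm_cast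
        _ ≤ U n + V n := add_le_add_right hlast _
    -- limsup U = 0
    have hUlim : Filter.limsup U Filter.atTop = 0 := by
      have h1 : Filter.Tendsto (fun n : ℕ => (n : ℝ)⁻¹ * L) Filter.atTop (nhds 0) := by
        simpa using tendsto_inv_atTop_nhds_zero_nat.mul_const L
      have h2 : Filter.Tendsto U Filter.atTop (nhds (0 : EReal)) := by
        rw [show ((0 : EReal)) = ((0 : ℝ) : EReal) by simp]
        exact EReal.tendsto_coe.2 h1
      exact h2.limsup_eq
    calc upperEntropy 𝓔 f = Filter.limsup (ψ f) Filter.atTop := rfl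
      _ ≤ Filter.limsup (fun n => U n + V n) Filter.atTop := Filter.limsup_le_limsup key
      _ = Filter.limsup (U + V) Filter.atTop := rfl
      _ ≤ Filter.limsup U Filter.atTop + Filter.limsup V Filter.atTop :=
          EReal.limsup_add_le (Or.inl (by rw [hUlim]; simp)) (Or.inl (by rw [hUlim]; simp))
      _ = Filter.limsup V Filter.atTop := by rw [hUlim, zero_add]
      _ ≤ ⨆ i, Filter.limsup (ψ (g i)) Filter.atTop := limsup_iSup_fin_le _
      _ = ⨆ i, upperEntropy 𝓔 (g i) := rfl
end
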